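/- For any hypergraph H and any vertex v, the energy of H - v is at most the energy of H, where H - v is obtained by removing v from the vertex set and from every edge containing it. -/
import Mathlib


open Matrix BigOperators

set_option linter.unusedSectionVars false

variable {V : Type*} [Fintype V] [DecidableEq V]

/-- Adjacency matrix of a (multi-)hypergraph given by its multiset of edges:
entry `(i,j)` is the number of edges containing both `i` and `j`, with zero diagonal. -/
def adjacencyMatrix (E : Multiset (Finset V)) : Matrix V V ℝ :=
  Matrix.of fun i j => if i = j then 0 else ((E.filter (fun e => i ∈ e ∧ j ∈ e)).card : ℝ)

lemma adjacency_isHermitian (E : Multiset (Finset V)) : (adjacencyMatrix E).IsHermitian := by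
  unfold Matrix.IsHermitian
  ext i j
  by_cases h : i = j
  · subst h; simp [adjacencyMatrix]
  · simp only [adjacencyMatrix, Matrix.conjTranspose_apply, Matrix.of_apply, h, Ne.symm h,
      if_false, star_trivial]
    congr 1
    exact congrArg Multiset.card (Multiset.filter_congr (fun e _ => and_comm))

/-- Energy of a (multi-)hypergraph: sum of the absolute values of the adjacency eigenvalues. -/
noncomputable def energy (E : Multiset (Finset V)) : ℝ :=
  ∑ i, |(adjacency_isHermitian E).eigenvalues i|

/-- Degree of a vertex: the number of edges containing it. -/
def hdegree (E : Multiset (Finset V)) (v : V) : ℕ := (E.filter (fun e => v ∈ e)).card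

/-- Zagreb index: sum of squares of vertex degrees. -/
def zagreb (E : Multiset (Finset V)) : ℕ := ∑ v, (hdegree E v)^2

/-- Vertex deletion: remove `v` from the vertex set and from every edge. -/
def removeVertex (E : Multiset (Finset V)) (v : V) :
    Multiset (Finset {u : V // u ≠ v}) :=
  E.map fun e => e.subtype (· ≠ v)


lemma abs_diag_le_one {n : Type*} [Fintype n] [DecidableEq n] {M : Matrix n n ℝ}
    (hM : M ∈ Matrix.unitaryGroup n ℝ) (i : n) : |M i i| ≤ 1 := by
  have h := Matrix.mem_unitaryGroup_iff.mp hM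
  have h2 : ∑ j, M i j * M i j = 1 := by
    have := congrFun (congrFun h i) i
    simpa [Matrix.mul_apply, Matrix.one_apply, Matrix.conjTranspose_apply] using this
  rw [abs_le_one_iff_mul_self_le_one]
  calc M i i * M i i ≤ ∑ j, M i j * M i j :=
        Finset.single_le_sum (f := fun j => M i j * M i j) (fun j _ => mul_self_nonneg _) (Finset.mem_univ i)
    _ = 1 := h2

lemma spectral_real {n : Type*} [Fintype n] [DecidableEq n] {A : Matrix n n ℝ}
    (hA : A.IsHermitian) :
    A = (hA.eigenvectorUnitary : Matrix n n ℝ) * Matrix.diagonal hA.eigenvalues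
      * star (hA.eigenvectorUnitary : Matrix n n ℝ) := by
  have := hA.spectral_theorem
  simpa [RCLike.ofReal_real_eq_id, Function.comp] using this

lemma trace_mul_le_energy {n : Type*} [Fintype n] [DecidableEq n] {A : Matrix n n ℝ}
    (hA : A.IsHermitian) {O : Matrix n n ℝ} (hO : O ∈ Matrix.unitaryGroup n ℝ) :
    (A * O).trace ≤ ∑ i, |hA.eigenvalues i| := by
  set U : Matrix n n ℝ := (hA.eigenvectorUnitary : Matrix n n ℝ) with hUdef
  have hU : U ∈ Matrix.unitaryGroup n ℝ := hA.eigenvectorUnitary.2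
  set M : Matrix n n ℝ := star U * O * U with hMdef
  have hM : M ∈ Matrix.unitaryGroup n ℝ :=
    mul_mem (mul_mem (Unitary.star_mem hU) hO) hU
  have htr : (A * O).trace = ∑ i, M i i * hA.eigenvalues i := by
    conv_lhs => rw [spectral_real hA]
    rw [← hUdef, mul_assoc (U * Matrix.diagonal hA.eigenvalues),
      Matrix.trace_mul_cycle U (Matrix.diagonal hA.eigenvalues) (star U * O),
      ← hMdef]
    simp [Matrix.trace, Matrix.mul_diagonal, Matrix.diag]
  rw [htr]
  apply Finset.sum_le_sum
  intro i _
  calc M i i * hA.eigenvalues i ≤ |M i i * hA.eigenvalues i| := le_abs_self _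
    _ = |M i i| * |hA.eigenvalues i| := abs_mul _ _
    _ ≤ 1 * |hA.eigenvalues i| :=
        mul_le_mul_of_nonneg_right (abs_diag_le_one hM i) (abs_nonneg _)
    _ = |hA.eigenvalues i| := one_mul _

lemma exists_unitary_trace {n : Type*} [Fintype n] [DecidableEq n] {A : Matrix n n ℝ}
    (hA : A.IsHermitian) :
    ∃ O ∈ Matrix.unitaryGroup n ℝ, (A * O).trace = ∑ i, |hA.eigenvalues i| := by
  set U : Matrix n n ℝ := (hA.eigenvectorUnitary : Matrix n n ℝ) with hUdef
  have hU : U ∈ Matrix.unitaryGroup n ℝ := hA.eigenvectorUnitary.2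
  have hU1 : U * star U = 1 := Matrix.mem_unitaryGroup_iff.mp hU
  have hU2 : star U * U = 1 := Matrix.mem_unitaryGroup_iff'.mp hU
  set s : n → ℝ := fun i => if hA.eigenvalues i < 0 then -1 else 1 with hsdef
  have hss : ∀ i, s i * s i = 1 := by
    intro i; simp only [hsdef]; split <;> norm_num
  refine ⟨U * Matrix.diagonal s * star U, ?_, ?_⟩
  · rw [Matrix.mem_unitaryGroup_iff]
    have hstar : star (U * Matrix.diagonal s * star U) = U * Matrix.diagonal s * star U := by
      simp [Matrix.star_mul, mul_assoc, Matrix.star_eq_conjTranspose, Matrix.diagonal_conjTranspose]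
    rw [hstar]
    calc U * Matrix.diagonal s * star U * (U * Matrix.diagonal s * star U)
        = U * (Matrix.diagonal s * (star U * U) * Matrix.diagonal s) * star U := by
          simp only [mul_assoc]
      _ = 1 := by
          rw [hU2, mul_one, Matrix.diagonal_mul_diagonal]
          simp only [hss, Matrix.diagonal_one, mul_one]
          exact hU1
  · conv_lhs => rw [spectral_real hA]
    rw [← hUdef, mul_assoc (U * Matrix.diagonal hA.eigenvalues)]
    rw [show star U * (U * Matrix.diagonal s * star U) = Matrix.diagonal s * star U by
      rw [← mul_assoc, ← mul_assoc, hU2, one_mul]]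
    simp only [← mul_assoc]
    rw [Matrix.trace_mul_cycle (U * Matrix.diagonal hA.eigenvalues) (Matrix.diagonal s) (star U)]
    rw [show star U * (U * Matrix.diagonal hA.eigenvalues) * Matrix.diagonal s
        = (star U * U) * Matrix.diagonal hA.eigenvalues * Matrix.diagonal s by
      simp only [mul_assoc]]
    rw [hU2, one_mul, Matrix.diagonal_mul_diagonal, Matrix.trace_diagonal]
    apply Finset.sum_congr rfl
    intro i _
    by_cases h : hA.eigenvalues i < 0
    · simp only [hsdef, if_pos h]
      rw [abs_of_neg h]; ring
    · simp only [hsdef, if_neg h]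
      rw [abs_of_nonneg (not_lt.mp h)]; ring


lemma adj_remove_eq (E : Multiset (Finset V)) (v : V) (i j : {u : V // u ≠ v}) :
    adjacencyMatrix (removeVertex E v) i j = adjacencyMatrix E i.1 j.1 := by
  simp only [adjacencyMatrix, removeVertex, Matrix.of_apply]
  by_cases h : i = j
  · simp [h]
  · have h' : (i : V) ≠ (j : V) := fun hh => h (Subtype.ext hh)
    rw [if_neg h, if_neg h']
    rw [Multiset.filter_map, Multiset.card_map]
    exact congrArg _ (congrArg Multiset.card
      (Multiset.filter_congr (fun e _ => by simp [Function.comp, Finset.mem_subtype])))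

lemma sum_split (v : V) (f : V → ℝ) :
    ∑ i, f i = f v + ∑ i : {u : V // u ≠ v}, f i.1 := by
  rw [← Finset.add_sum_erase Finset.univ f (Finset.mem_univ v)]
  congr 1
  rw [Finset.sum_subtype (p := fun u => u ≠ v) (Finset.univ.erase v) (fun x => by simp) f]

noncomputable def extendO (v : V) (O' : Matrix {u : V // u ≠ v} {u : V // u ≠ v} ℝ) :
    Matrix V V ℝ :=
  Matrix.of fun i j =>
    if hi : i = v then (if j = v then 1 else 0)
    else if hj : j = v then 0 else O' ⟨i, hi⟩ ⟨j, hj⟩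

lemma extendO_v_apply (v : V) (O' : Matrix {u : V // u ≠ v} {u : V // u ≠ v} ℝ) (j : V) :
    extendO v O' v j = if j = v then 1 else 0 := by simp [extendO]

lemma extendO_apply_v (v : V) (O' : Matrix {u : V // u ≠ v} {u : V // u ≠ v} ℝ) {i : V}
    (hi : i ≠ v) : extendO v O' i v = 0 := by simp [extendO, hi]

lemma extendO_apply (v : V) (O' : Matrix {u : V // u ≠ v} {u : V // u ≠ v} ℝ) {i j : V}
    (hi : i ≠ v) (hj : j ≠ v) : extendO v O' i j = O' ⟨i, hi⟩ ⟨j, hj⟩ := by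
  simp [extendO, hi, hj]

lemma extendO_mem (v : V) {O' : Matrix {u : V // u ≠ v} {u : V // u ≠ v} ℝ}
    (hO' : O' ∈ Matrix.unitaryGroup {u : V // u ≠ v} ℝ) :
    extendO v O' ∈ Matrix.unitaryGroup V ℝ := by
  have h1 := Matrix.mem_unitaryGroup_iff.mp hO'
  rw [Matrix.mem_unitaryGroup_iff]
  ext i k
  have key : (extendO v O' * star (extendO v O')) i k
      = ∑ j, extendO v O' i j * extendO v O' k j := by
    simp [Matrix.mul_apply, Matrix.conjTranspose_apply]
  rw [key]
  by_cases hi : i = v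
  · rw [hi]
    have : ∀ j, extendO v O' v j * extendO v O' k j
        = if j = v then extendO v O' k v else 0 := by
      intro j
      rw [extendO_v_apply]
      split <;> simp_all
    rw [Finset.sum_congr rfl (fun j _ => this j), Finset.sum_ite_eq' Finset.univ v]
    by_cases hk : k = v
    · rw [hk]; simp [extendO_v_apply, Matrix.one_apply]
    · rw [extendO_apply_v v O' hk, if_pos (Finset.mem_univ v)]
      exact ((Matrix.one_apply_ne (α := ℝ) (fun h : v = k => hk h.symm))).symm
  · by_cases hk : k = v
    · rw [hk]
      have : ∀ j, extendO v O' i j * extendO v O' v j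
          = if j = v then extendO v O' i v else 0 := by
        intro j
        rw [extendO_v_apply]
        split <;> simp_all
      rw [Finset.sum_congr rfl (fun j _ => this j), Finset.sum_ite_eq' Finset.univ v]
      simp [extendO_apply_v v O' hi, Matrix.one_apply, hi]
    · rw [sum_split v (fun j => extendO v O' i j * extendO v O' k j)]
      rw [extendO_apply_v v O' hi, zero_mul, zero_add]
      have h2 : ∑ j : {u : V // u ≠ v}, O' ⟨i, hi⟩ j * O' ⟨k, hk⟩ j
          = if i = k then (1:ℝ) else 0 := by
        have := congrFun (congrFun h1 ⟨i, hi⟩) ⟨k, hk⟩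
        simpa [Matrix.mul_apply, Matrix.conjTranspose_apply, Matrix.one_apply,
          Subtype.ext_iff] using this
      rw [Finset.sum_congr rfl
        (fun j _ => by rw [extendO_apply v O' hi j.2, extendO_apply v O' hk j.2]), h2]
      simp [Matrix.one_apply]

lemma trace_extendO (E : Multiset (Finset V)) (v : V)
    (O' : Matrix {u : V // u ≠ v} {u : V // u ≠ v} ℝ) :
    (adjacencyMatrix E * extendO v O').trace
      = (adjacencyMatrix (removeVertex E v) * O').trace := by
  have hdiag : ∀ w : V, adjacencyMatrix E w w = 0 := fun w => by simp [adjacencyMatrix]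
  simp only [Matrix.trace, Matrix.diag, Matrix.mul_apply]
  rw [sum_split v (fun i => ∑ j, adjacencyMatrix E i j * extendO v O' j i)]
  have hv : ∑ j, adjacencyMatrix E v j * extendO v O' j v = 0 := by
    rw [sum_split v (fun j => adjacencyMatrix E v j * extendO v O' j v)]
    rw [hdiag v, zero_mul]
    simp only [zero_add]
    apply Finset.sum_eq_zero
    intro j _
    rw [extendO_apply_v v O' j.2, mul_zero]
  rw [hv, zero_add]
  apply Finset.sum_congr rfl
  intro i _
  rw [sum_split v (fun j => adjacencyMatrix E i.1 j * extendO v O' j i.1)]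
  rw [extendO_v_apply, if_neg i.2, mul_zero, zero_add]
  apply Finset.sum_congr rfl
  intro j _
  rw [extendO_apply v O' j.2 i.2, adj_remove_eq]

/-- the energy of `H - v` is at most the energy of `H`. -/
theorem stmt_10 (E : Finset (Finset V)) (hcard : ∀ e ∈ E, 2 ≤ e.card) (v : V) :
    energy (removeVertex E.val v) ≤ energy E.val := by
  obtain ⟨O', hO', htr⟩ := exists_unitary_trace (adjacency_isHermitian (removeVertex E.val v))
  unfold energy
  rw [← htr, ← trace_extendO E.val v O']
  exact trace_mul_le_energy (adjacency_isHermitian E.val) (extendO_mem v hO')
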